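/- Let V be a random variable satisfying weak ignorability, i.e., Y(t) is conditionally independent of T given V, and let ℙ_t = ℙ_t(V) be a measurable function of V such that Y(t) is conditionally independent of V given ℙ_t(V) (a Pt-score). Then Y(t) is conditionally independent of the pair (V, T) given ℙ_t(V). -/

import Mathlib

open MeasureTheory ProbabilityTheory

/-- The conditional expectation of an indicator is a.e. bounded by 1 in norm. -/
lemma aux_condexp_norm_le_one {Ω : Type*} {m mΩ : MeasurableSpace Ω} {μ : Measure Ω}
    [IsProbabilityMeasure μ] (hm : m ≤ mΩ)
    {A : Set Ω} (hA : MeasurableSet[mΩ] A) :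
    ∀ᵐ ω ∂μ, ‖(μ⟦A | m⟧) ω‖ ≤ 1 := by
  have hint : Integrable (A.indicator fun _ => (1:ℝ)) μ := (integrable_const 1).indicator hA
  have h0 : 0 ≤ᵐ[μ] μ⟦A | m⟧ :=
    condExp_nonneg (Filter.Eventually.of_forall fun ω =>
      Set.indicator_nonneg (fun _ _ => zero_le_one) ω)
  have h1 : μ⟦A | m⟧ ≤ᵐ[μ] μ[(fun _ => (1:ℝ)) | m] :=
    condExp_mono hint (integrable_const 1)
      (Filter.Eventually.of_forall fun ω => by
        by_cases h : ω ∈ A <;> simp [Set.indicator_of_mem, Set.indicator_of_notMem, h])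
  rw [condExp_const hm] at h1
  filter_upwards [h0, h1] with ω h0ω h1ω
  rw [Real.norm_eq_abs, abs_of_nonneg h0ω]
  exact h1ω

/-- If `A` is conditionally independent (in the condexp sense) of every `mV`-set given `mP ≤ mV`,
then conditioning on `mV` is the same as conditioning on `mP`. -/
lemma aux_condexp_eq_of_score {Ω : Type*} {mP mV mΩ : MeasurableSpace Ω} {μ : Measure Ω}
    [IsProbabilityMeasure μ] (hPV : mP ≤ mV) (hVle : mV ≤ mΩ)
    {A : Set Ω} (hA : MeasurableSet[mΩ] A)
    (h : ∀ B : Set Ω, MeasurableSet[mV] B →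
      (μ⟦A ∩ B | mP⟧) =ᵐ[μ] fun ω => (μ⟦A | mP⟧) ω * (μ⟦B | mP⟧) ω) :
    μ⟦A | mP⟧ =ᵐ[μ] μ⟦A | mV⟧ := by
  have hPle : mP ≤ mΩ := hPV.trans hVle
  refine ae_eq_condExp_of_forall_setIntegral_eq hVle ((integrable_const 1).indicator hA)
    (fun B hB hμB => integrable_condExp.integrableOn) (fun B hB hμB => ?_)
    (stronglyMeasurable_condExp.mono hPV).aestronglyMeasurable
  have hBΩ : MeasurableSet[mΩ] B := hVle _ hB
  have hgmeas : AEStronglyMeasurable (μ⟦A | mP⟧) μ :=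
    (stronglyMeasurable_condExp.mono hPle).aestronglyMeasurable
  have hbd := aux_condexp_norm_le_one (μ := μ) hPle hA
  have hint1B : Integrable (B.indicator fun _ => (1:ℝ)) μ := (integrable_const 1).indicator hBΩ
  have hintprod : Integrable (fun x => (μ⟦A | mP⟧) x * B.indicator (fun _ => (1:ℝ)) x) μ :=
    hint1B.bdd_mul hgmeas hbd
  have e1 : ∫ x in B, (μ⟦A | mP⟧) x ∂μ
      = ∫ x, (μ⟦A | mP⟧) x * B.indicator (fun _ => (1:ℝ)) x ∂μ := by
    rw [← integral_indicator hBΩ]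
    congr 1
    ext x
    by_cases hx : x ∈ B <;> simp [hx]
  have e3 : μ[(fun x => (μ⟦A | mP⟧) x * B.indicator (fun _ => (1:ℝ)) x) | mP]
      =ᵐ[μ] fun x => (μ⟦A | mP⟧) x * (μ⟦B | mP⟧) x := by
    have := condExp_mul_of_stronglyMeasurable_left (μ := μ) (m := mP)
      (stronglyMeasurable_condExp (f := A.indicator fun _ => (1:ℝ)))
      hintprod hint1B
    exact this
  have e4 : (fun x => (μ⟦A | mP⟧) x * (μ⟦B | mP⟧) x) =ᵐ[μ] μ⟦A ∩ B | mP⟧ := (h B hB).symm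
  calc ∫ x in B, (μ⟦A | mP⟧) x ∂μ
      = ∫ x, (μ⟦A | mP⟧) x * B.indicator (fun _ => (1:ℝ)) x ∂μ := e1
    _ = ∫ x, (μ[(fun x => (μ⟦A | mP⟧) x * B.indicator (fun _ => (1:ℝ)) x) | mP]) x ∂μ :=
        (integral_condExp hPle).symm
    _ = ∫ x, (μ⟦A ∩ B | mP⟧) x ∂μ := integral_congr_ae (e3.trans e4)
    _ = ∫ x, (A ∩ B).indicator (fun _ => (1:ℝ)) x ∂μ :=
        integral_condExp hPle
    _ = ∫ x in B, A.indicator (fun _ => (1:ℝ)) x ∂μ := by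
        rw [← integral_indicator hBΩ]
        congr 1
        ext x
        by_cases hx : x ∈ B <;> by_cases hx' : x ∈ A <;> simp [hx, hx']

lemma aux_pt {Ω 𝒱 𝒴 : Type*} {mP mV mΩ : MeasurableSpace Ω}
    [hsb : @StandardBorelSpace Ω mΩ] [m𝒱 : MeasurableSpace 𝒱] [m𝒴 : MeasurableSpace 𝒴]
    {μ : Measure Ω} [IsProbabilityMeasure μ]
    (hPV : mP ≤ mV) (hVle : mV ≤ mΩ)
    (T : Ω → Bool) (hT : Measurable T)
    (V : Ω → 𝒱) (hV : Measurable V) (hmV : mV = MeasurableSpace.comap V m𝒱)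
    (f : Ω → 𝒴) (hf : Measurable f)
    (hex : ∀ s c, MeasurableSet s → MeasurableSet c →
        (μ⟦f ⁻¹' s ∩ T ⁻¹' c | mV⟧) =ᵐ[μ]
          fun ω => (μ⟦f ⁻¹' s | mV⟧) ω * (μ⟦T ⁻¹' c | mV⟧) ω)
    (hsc : ∀ s B, MeasurableSet s → MeasurableSet[mV] B →
        (μ⟦f ⁻¹' s ∩ B | mP⟧) =ᵐ[μ]
          fun ω => (μ⟦f ⁻¹' s | mP⟧) ω * (μ⟦B | mP⟧) ω) :
    CondIndep mP (MeasurableSpace.comap f m𝒴)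
      (MeasurableSpace.comap (fun ω => (V ω, T ω)) inferInstance) (hPV.trans hVle) μ := by
  have hPle : mP ≤ mΩ := hPV.trans hVle
  have step1 : ∀ s : Set 𝒴, MeasurableSet s →
      (μ⟦f ⁻¹' s | mP⟧) =ᵐ[μ] μ⟦f ⁻¹' s | mV⟧ := fun s hs =>
    aux_condexp_eq_of_score hPV hVle (hf hs) (fun B hB => hsc s B hs hB)
  -- the two π-systems
  set p1 : Set (Set Ω) := {S | MeasurableSet[MeasurableSpace.comap f m𝒴] S} with hp1def
  set p2 : Set (Set Ω) :=
    {S | ∃ b c, MeasurableSet b ∧ MeasurableSet c ∧ V ⁻¹' b ∩ T ⁻¹' c = S} with hp2def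
  have hpm1 : MeasurableSpace.comap f m𝒴 = MeasurableSpace.generateFrom p1 :=
    (@MeasurableSpace.generateFrom_measurableSet Ω (MeasurableSpace.comap f m𝒴)).symm
  have hpm2 : MeasurableSpace.comap (fun ω => (V ω, T ω)) inferInstance
      = MeasurableSpace.generateFrom p2 := by
    conv_lhs => rw [← generateFrom_prod]
    rw [MeasurableSpace.comap_generateFrom]
    congr 1
    ext S
    simp only [Set.mem_image, Set.mem_image2, Set.mem_setOf_eq, hp2def]
    constructor
    · rintro ⟨u, ⟨b, hb, c, hc, rfl⟩, rfl⟩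
      exact ⟨b, c, hb, hc, by ext ω; simp⟩
    · rintro ⟨b, c, hb, hc, rfl⟩
      exact ⟨b ×ˢ c, ⟨b, hb, c, hc, rfl⟩, by ext ω; simp⟩
  have hpi1 : IsPiSystem p1 := @MeasurableSpace.isPiSystem_measurableSet Ω
    (MeasurableSpace.comap f m𝒴)
  have hpi2 : IsPiSystem p2 := by
    rintro S ⟨b, c, hb, hc, rfl⟩ S' ⟨b', c', hb', hc', rfl⟩ -
    exact ⟨b ∩ b', c ∩ c', hb.inter hb', hc.inter hc', by ext ω; simp; tauto⟩
  have hsets : CondIndepSets mP hPle p1 p2 μ := by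
    rw [condIndepSets_iff _ _ _ _ ?hm1 ?hm2]
    case hm1 =>
      rintro S hS
      exact hf.comap_le _ hS
    case hm2 =>
      rintro S ⟨b, c, hb, hc, rfl⟩
      exact ((hV hb).inter (hT hc))
    rintro A S hA ⟨b, c, hb, hc, rfl⟩
    obtain ⟨s, hs, rfl⟩ := hA
    -- notation
    have hBmV : MeasurableSet[mV] (V ⁻¹' b) := hmV ▸ ⟨b, hb, rfl⟩
    have hBΩ : MeasurableSet[mΩ] (V ⁻¹' b) := hV hb
    have hCΩ : MeasurableSet[mΩ] (T ⁻¹' c) := hT hc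
    have hAΩ : MeasurableSet[mΩ] (f ⁻¹' s) := hf hs
    have hset : f ⁻¹' s ∩ (V ⁻¹' b ∩ T ⁻¹' c) = V ⁻¹' b ∩ (f ⁻¹' s ∩ T ⁻¹' c) := by
      ext ω; simp; tauto
    have h2 : (μ⟦V ⁻¹' b ∩ (f ⁻¹' s ∩ T ⁻¹' c) | mV⟧)
        =ᵐ[μ] (V ⁻¹' b).indicator (μ⟦f ⁻¹' s ∩ T ⁻¹' c | mV⟧) := by
      rw [show (V ⁻¹' b ∩ (f ⁻¹' s ∩ T ⁻¹' c)).indicator (fun _ => (1:ℝ))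
          = (V ⁻¹' b).indicator ((f ⁻¹' s ∩ T ⁻¹' c).indicator (fun _ => (1:ℝ)))
        from (Set.indicator_indicator _ _ _).symm]
      exact condExp_indicator ((integrable_const 1).indicator (hAΩ.inter hCΩ)) hBmV
    have h3 : (V ⁻¹' b).indicator (μ⟦f ⁻¹' s ∩ T ⁻¹' c | mV⟧)
        =ᵐ[μ] fun ω => (μ⟦f ⁻¹' s | mP⟧) ω
            * ((V ⁻¹' b).indicator (μ⟦T ⁻¹' c | mV⟧)) ω := by
      filter_upwards [hex s c hs hc, step1 s hs] with ω hωex hωs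
      by_cases hωB : ω ∈ V ⁻¹' b
      · simp only [Set.indicator_of_mem hωB, hωex, hωs]
      · simp [Set.indicator_of_notMem hωB]
    have hH : Integrable ((V ⁻¹' b).indicator (μ⟦T ⁻¹' c | mV⟧)) μ :=
      integrable_condExp.indicator hBΩ
    have hGH : Integrable (fun ω => (μ⟦f ⁻¹' s | mP⟧) ω
        * ((V ⁻¹' b).indicator (μ⟦T ⁻¹' c | mV⟧)) ω) μ :=
      hH.bdd_mul (stronglyMeasurable_condExp.mono hPle).aestronglyMeasurable
        (aux_condexp_norm_le_one (μ := μ) hPle hAΩ)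
    have h5 : μ[(fun ω => (μ⟦f ⁻¹' s | mP⟧) ω
          * ((V ⁻¹' b).indicator (μ⟦T ⁻¹' c | mV⟧)) ω) | mP]
        =ᵐ[μ] fun ω => (μ⟦f ⁻¹' s | mP⟧) ω
          * (μ[(V ⁻¹' b).indicator (μ⟦T ⁻¹' c | mV⟧) | mP]) ω :=
      condExp_mul_of_stronglyMeasurable_left stronglyMeasurable_condExp hGH hH
    have h6 : μ[(V ⁻¹' b).indicator (μ⟦T ⁻¹' c | mV⟧) | mP]
        =ᵐ[μ] μ⟦V ⁻¹' b ∩ T ⁻¹' c | mP⟧ := by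
      have hi : (μ⟦V ⁻¹' b ∩ T ⁻¹' c | mV⟧)
          =ᵐ[μ] (V ⁻¹' b).indicator (μ⟦T ⁻¹' c | mV⟧) := by
        rw [show (V ⁻¹' b ∩ T ⁻¹' c).indicator (fun _ => (1:ℝ))
            = (V ⁻¹' b).indicator ((T ⁻¹' c).indicator (fun _ => (1:ℝ)))
          from (Set.indicator_indicator _ _ _).symm]
        exact condExp_indicator ((integrable_const 1).indicator hCΩ) hBmV
      exact (condExp_congr_ae hi.symm).trans (condExp_condExp_of_le hPV hVle)
    calc (μ⟦f ⁻¹' s ∩ (V ⁻¹' b ∩ T ⁻¹' c) | mP⟧)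
        = μ⟦V ⁻¹' b ∩ (f ⁻¹' s ∩ T ⁻¹' c) | mP⟧ := by rw [hset]
      _ =ᵐ[μ] μ[(μ⟦V ⁻¹' b ∩ (f ⁻¹' s ∩ T ⁻¹' c) | mV⟧) | mP] :=
          (condExp_condExp_of_le hPV hVle).symm
      _ =ᵐ[μ] μ[(fun ω => (μ⟦f ⁻¹' s | mP⟧) ω
            * ((V ⁻¹' b).indicator (μ⟦T ⁻¹' c | mV⟧)) ω) | mP] :=
          condExp_congr_ae (h2.trans h3)
      _ =ᵐ[μ] fun ω => (μ⟦f ⁻¹' s | mP⟧) ω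
            * (μ[(V ⁻¹' b).indicator (μ⟦T ⁻¹' c | mV⟧) | mP]) ω := h5
      _ =ᵐ[μ] (μ⟦f ⁻¹' s | mP⟧) * (μ⟦V ⁻¹' b ∩ T ⁻¹' c | mP⟧) := by
          filter_upwards [h6] with ω hω
          simp only [Pi.mul_apply, hω]
  exact CondIndepSets.condIndep hf.comap_le (hV.prodMk hT).comap_le hpi1 hpi2 hpm1 hpm2 hsets


/-- **Independence property of Pt-scores.** Let `V` give weak ignorability in the sense
that `Y t ⟂ T | V`, and let `P t` be a measurable function of `V` such that
`Y t ⟂ V | P t (V)` (a Pt-score). Then `Y t` is conditionally independent of the pair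
`(V, T)` given `P t (V)`. -/
theorem pt_score_indep
    {Ω 𝒱 𝒬 𝒴 : Type*}
    [MeasurableSpace Ω] [StandardBorelSpace Ω]
    [MeasurableSpace 𝒱] [MeasurableSpace 𝒬] [MeasurableSpace 𝒴]
    (μ : Measure Ω) [IsProbabilityMeasure μ]
    (T : Ω → Bool) (hT : Measurable T)
    (V : Ω → 𝒱) (hV : Measurable V)
    (Y : Bool → Ω → 𝒴) (hY : ∀ t, Measurable (Y t))
    (P : Bool → 𝒱 → 𝒬) (hP : ∀ t, Measurable (P t))
    -- exchangeability given `V`: `Y t ⟂ T | V`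
    (hexch : ∀ t, CondIndepFun (MeasurableSpace.comap V inferInstance)
        hV.comap_le (Y t) T μ)
    -- Pt-score: `Y t ⟂ V | P t (V)`
    (hscore : ∀ t, CondIndepFun
        (MeasurableSpace.comap (fun ω => P t (V ω)) inferInstance)
        (((hP t).comp hV).comap_le) (Y t) V μ) :
    -- conclusion: `Y t ⟂ (V, T) | P t (V)`
    ∀ t, CondIndepFun
        (MeasurableSpace.comap (fun ω => P t (V ω)) inferInstance)
        (((hP t).comp hV).comap_le) (Y t) (fun ω => (V ω, T ω)) μ := by
  
  intro t
  have hPV : MeasurableSpace.comap (fun ω => P t (V ω)) inferInstance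
      ≤ MeasurableSpace.comap V inferInstance := by
    rw [show (fun ω => P t (V ω)) = (P t) ∘ V from rfl, ← MeasurableSpace.comap_comp]
    exact MeasurableSpace.comap_mono (hP t).comap_le
  have hex := (condIndepFun_iff_condExp_inter_preimage_eq_mul (hY t) hT).mp (hexch t)
  have hsc0 := (condIndepFun_iff_condExp_inter_preimage_eq_mul (hY t) hV).mp (hscore t)
  have hsc : ∀ (s : Set 𝒴) (B : Set Ω), MeasurableSet s →
      MeasurableSet[MeasurableSpace.comap V inferInstance] B →
      (μ⟦Y t ⁻¹' s ∩ B | MeasurableSpace.comap (fun ω => P t (V ω)) inferInstance⟧) =ᵐ[μ]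
        fun ω => (μ⟦Y t ⁻¹' s | MeasurableSpace.comap (fun ω => P t (V ω)) inferInstance⟧) ω
          * (μ⟦B | MeasurableSpace.comap (fun ω => P t (V ω)) inferInstance⟧) ω := by
    intro s B hs hB
    obtain ⟨b, hb, rfl⟩ := hB
    exact hsc0 s b hs hb
  exact aux_pt hPV hV.comap_le T hT V hV rfl (Y t) (hY t) hex hsc
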